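/- Let H₀ and H be Hermitian matrices on a finite-dimensional Hilbert space, β ∈ ℝ, and for s ∈ [0,1] set H(s) := H₀ + s(H−H₀) with Gibbs state g_s(β) := e^{−βH(s)}/Tr(e^{−βH(s)}). Then for any operator A, Tr(A g₀(β)) − Tr(A g₁(β)) = β ∫₀¹∫₀¹ cov_{g_s(β)}^τ (H−H₀, A) dτ ds, where cov_ρ^τ(X,Y) := Tr(ρ^τ X ρ^{1−τ} Y) − Tr(ρX)Tr(ρY). -/

import Mathlib

open Matrix intervalIntegral

variable {n : Type*} [Fintype n] [DecidableEq n]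

/-- `e^{−tβ H}` for a matrix `H`. -/
noncomputable def expH (H : Matrix n n ℂ) (β t : ℝ) : Matrix n n ℂ :=
  NormedSpace.exp ((-(t * β) : ℂ) • H)

/-- The partition function `Z(β) = Tr e^{−βH}`. -/
noncomputable def partZ (H : Matrix n n ℂ) (β : ℝ) : ℂ := (expH H β 1).trace

/-- The Gibbs state `g(β) = e^{−βH}/Z(β)`. -/
noncomputable def gibbs (H : Matrix n n ℂ) (β : ℝ) : Matrix n n ℂ :=
  (partZ H β)⁻¹ • expH H β 1

/-- The generalized covariance `cov_{g(β)}^τ(X,Y) = Tr(g^τ X g^{1−τ} Y) − Tr(g X) Tr(g Y)`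
of the Gibbs state of `H`, using `g(β)^τ = e^{−τβH}/Z^τ` and `Z^τ Z^{1−τ} = Z`. -/
noncomputable def gibbsCov (H : Matrix n n ℂ) (β τ : ℝ) (X Y : Matrix n n ℂ) : ℂ :=
  (expH H β τ * X * expH H β (1 - τ) * Y).trace / partZ H β -
    (gibbs H β * X).trace * (gibbs H β * Y).trace

section Aux

open NormedSpace MeasureTheory

set_option linter.unusedSectionVars false
set_option maxHeartbeats 4000000

attribute [local instance] Matrix.linftyOpNormedRing Matrix.linftyOpNormedAlgebra

lemma swapIntegral {φ : ℝ → ℝ → ℂ} (h : Continuous fun p : ℝ × ℝ => φ p.1 p.2) :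
    ∫ s in (0:ℝ)..1, ∫ τ in (0:ℝ)..1, φ s τ = ∫ τ in (0:ℝ)..1, ∫ s in (0:ℝ)..1, φ s τ := by
  have h1 : (volume.restrict (Set.Ioc (0:ℝ) 1)).prod (volume.restrict (Set.Ioc (0:ℝ) 1)) =
      ((volume : Measure ℝ).prod (volume : Measure ℝ)).restrict
        ((Set.Ioc (0:ℝ) 1) ×ˢ (Set.Ioc (0:ℝ) 1)) :=
    MeasureTheory.Measure.prod_restrict _ _
  have hint : MeasureTheory.Integrable (Function.uncurry φ)
      ((volume.restrict (Set.Ioc (0:ℝ) 1)).prod (volume.restrict (Set.Ioc (0:ℝ) 1))) := by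
    rw [h1]
    have hc : MeasureTheory.IntegrableOn (Function.uncurry φ)
        ((Set.Icc (0:ℝ) 1) ×ˢ (Set.Icc (0:ℝ) 1)) :=
      (h.continuousOn).integrableOn_compact (isCompact_Icc.prod isCompact_Icc)
    exact hc.mono_set (Set.prod_mono Set.Ioc_subset_Icc_self Set.Ioc_subset_Icc_self)
  rw [intervalIntegral.integral_of_le zero_le_one, intervalIntegral.integral_of_le zero_le_one]
  simp_rw [intervalIntegral.integral_of_le zero_le_one]
  exact MeasureTheory.integral_integral_swap hint

/-- Trace as a continuous `ℝ`-linear map. -/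
noncomputable def traceCLM' : Matrix n n ℂ →L[ℝ] ℂ :=
  LinearMap.toContinuousLinearMap ((Matrix.traceLinearMap n ℂ ℂ).restrictScalars ℝ)

lemma traceCLM'_apply (A : Matrix n n ℂ) : traceCLM' A = A.trace := rfl

lemma hasDerivAt_exp_real' (B : Matrix n n ℂ) (τ : ℝ) :
    HasDerivAt (fun t : ℝ => exp (t • B)) (exp (τ • B) * B) τ := by
  exact hasDerivAt_exp_smul_const (𝕂 := ℝ) B τ

lemma continuous_exp_smul' (B : Matrix n n ℂ) : Continuous fun t : ℝ => exp (t • B) :=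
  exp_continuous.comp (continuous_id.smul continuous_const)

lemma hasDerivAt_exp_one_sub' (C : Matrix n n ℂ) (τ : ℝ) :
    HasDerivAt (fun t : ℝ => exp ((1 - t) • C)) (-(exp ((1 - τ) • C) * C)) τ := by
  have h1 : HasDerivAt (fun t : ℝ => 1 - t) (-1) τ := by
    simpa using (hasDerivAt_id τ).const_sub 1
  have := (hasDerivAt_exp_real' C (1 - τ)).scomp (x := τ) h1
  simp only [neg_one_smul, neg_smul, one_smul] at this
  exact this

/-- Scalar Duhamel identity. -/
lemma duhamel' (P B C : Matrix n n ℂ) :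
    (P * exp B).trace - (P * exp C).trace =
      ∫ τ in (0:ℝ)..1,
        (P * exp ((τ:ℝ) • B) * (B - C) * exp ((1 - τ:ℝ) • C)).trace := by
  set ψ : ℝ → ℂ := fun τ => (P * exp ((τ:ℝ) • B) * (B - C) * exp ((1 - τ:ℝ) • C)).trace
    with hψ
  have hψcont : Continuous ψ := by
    apply Continuous.matrix_trace
    exact ((continuous_const.mul (continuous_exp_smul' B)).mul continuous_const).mul
      (exp_continuous.comp ((continuous_const.sub continuous_id).smul continuous_const))
  have key : ∀ τ : ℝ, τ ∈ Set.uIcc (0:ℝ) 1 → HasDerivAt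
      (fun t : ℝ => (P * exp (t • B) * exp ((1 - t) • C)).trace) (ψ τ) τ := by
    intro τ _
    have hu := (hasDerivAt_exp_real' B τ).const_mul P
    have hv := hasDerivAt_exp_one_sub' C τ
    have hF := hu.mul hv
    have h2 := (traceCLM' (n := n)).hasFDerivAt.comp_hasDerivAt τ hF
    have hfun : (fun t : ℝ => (P * exp (t • B) * exp ((1 - t) • C)).trace) =
        (traceCLM' (n := n)) ∘ (fun t : ℝ => P * exp (t • B) * exp ((1 - t) • C)) := rfl
    rw [hfun]
    refine h2.congr_deriv ?_
    symm
    have hcomm : exp ((1 - τ:ℝ) • C) * C = C * exp ((1 - τ:ℝ) • C) :=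
      (((Commute.refl C).smul_left ((1:ℝ) - τ)).exp_left).eq
    simp only [hψ, map_add, traceCLM'_apply, mul_neg, trace_neg]
    have hx : P * exp (τ • B) * (B - C) * exp ((1 - τ:ℝ) • C) =
        P * exp (τ • B) * B * exp ((1 - τ:ℝ) • C) -
          P * exp (τ • B) * exp ((1 - τ:ℝ) • C) * C := by
      rw [mul_sub, sub_mul]
      congr 1
      rw [mul_assoc (P * exp (τ • B)) C, ← hcomm, ← mul_assoc]
    rw [hx, trace_sub, sub_eq_add_neg]
    simp [mul_assoc]
    show _ = Matrix.trace _
    rw [trace_add, trace_neg]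
  have := intervalIntegral.integral_eq_sub_of_hasDerivAt key
    (hψcont.intervalIntegrable 0 1)
  rw [this]
  norm_num [NormedSpace.exp_zero]

lemma hasDerivAt_trace_exp' (P B₀ B₁ : Matrix n n ℂ) (s : ℝ) :
    HasDerivAt (fun u : ℝ => (P * exp (B₀ + u • B₁)).trace)
      (∫ τ in (0:ℝ)..1, (P * exp (τ • (B₀ + s • B₁)) * B₁ *
        exp ((1 - τ:ℝ) • (B₀ + s • B₁))).trace) s := by
  set G : ℝ → ℂ := fun u => ∫ τ in (0:ℝ)..1,
    (P * exp (τ • (B₀ + u • B₁)) * B₁ * exp ((1 - τ:ℝ) • (B₀ + s • B₁))).trace with hG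
  have hGcont : Continuous G := by
    apply intervalIntegral.continuous_parametric_intervalIntegral_of_continuous'
      (f := fun u τ => (P * exp (τ • (B₀ + u • B₁)) * B₁ *
        exp ((1 - τ:ℝ) • (B₀ + s • B₁))).trace)
    apply Continuous.matrix_trace
    have hexp1 : Continuous fun x : ℝ × ℝ => exp (x.2 • (B₀ + x.1 • B₁)) :=
      exp_continuous.comp (Continuous.smul continuous_snd
        (continuous_const.add (Continuous.smul continuous_fst continuous_const)))
    have hexp2 : Continuous fun x : ℝ × ℝ => exp ((1 - x.2) • (B₀ + s • B₁)) :=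
      exp_continuous.comp (Continuous.smul (continuous_const.sub continuous_snd)
        continuous_const)
    exact Continuous.mul (Continuous.mul (Continuous.mul continuous_const hexp1)
      continuous_const) hexp2
  rw [hasDerivAt_iff_tendsto_slope]
  have heq : ∀ u : ℝ, u ≠ s →
      slope (fun u : ℝ => (P * exp (B₀ + u • B₁)).trace) s u = G u := by
    intro u hu
    rw [slope_def_module]
    rw [duhamel' P (B₀ + u • B₁) (B₀ + s • B₁)]
    have hd : (B₀ + u • B₁) - (B₀ + s • B₁) = (u - s) • B₁ := by
      rw [sub_smul]; abel
    rw [hd]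
    have : ∀ τ : ℝ, (P * exp (τ • (B₀ + u • B₁)) * ((u - s) • B₁) *
        exp ((1 - τ:ℝ) • (B₀ + s • B₁))).trace =
        (u - s) • (P * exp (τ • (B₀ + u • B₁)) * B₁ *
        exp ((1 - τ:ℝ) • (B₀ + s • B₁))).trace := by
      intro τ
      rw [mul_smul_comm, smul_mul_assoc, trace_smul]
    simp only [this]
    rw [intervalIntegral.integral_smul, hG, smul_smul,
      inv_mul_cancel₀ (sub_ne_zero.mpr hu), one_smul]
  refine Filter.Tendsto.congr' ?_ ((hGcont.tendsto s).mono_left nhdsWithin_le_nhds)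
  filter_upwards [self_mem_nhdsWithin] with u hu
  exact (heq u hu).symm

lemma trace_exp_pos' [Nonempty n] {B : Matrix n n ℂ} (hB : B.IsHermitian) :
    (0:ℝ) < (NormedSpace.exp B).trace.re ∧ (NormedSpace.exp B).trace.im = 0 := by
  set U : Matrix n n ℂ := (Matrix.IsHermitian.eigenvectorUnitary hB : Matrix n n ℂ) with hUdef
  have h1 : star U * U = 1 := Unitary.coe_star_mul_self _
  have h2 : U * star U = 1 := Unitary.coe_mul_star_self _
  have hU : IsUnit U := ⟨⟨U, star U, h2, h1⟩, rfl⟩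
  have hinv : U⁻¹ = star U := Matrix.inv_eq_left_inv h1
  have hspec : B = U * diagonal (RCLike.ofReal ∘ hB.eigenvalues) * star U :=
    hB.spectral_theorem
  have hexp : exp B = U * exp (diagonal (RCLike.ofReal ∘ hB.eigenvalues)) * star U := by
    conv_lhs => rw [hspec, ← hinv]
    rw [Matrix.exp_conj U _ hU, hinv]
  have htr : (exp B).trace = ∑ i, Complex.exp (hB.eigenvalues i : ℂ) := by
    rw [hexp, Matrix.trace_mul_cycle, h1, one_mul, Matrix.exp_diagonal,
      trace_diagonal]
    congr 1; ext i
    simp [Function.comp, ← Complex.exp_eq_exp_ℂ]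
  have hre : ∀ i : n, (Complex.exp (hB.eigenvalues i : ℂ)) =
      ((Real.exp (hB.eigenvalues i) : ℝ) : ℂ) := by
    intro i; rw [Complex.ofReal_exp]
  rw [htr]
  simp only [hre]
  rw [← Complex.ofReal_sum]
  constructor
  · rw [Complex.ofReal_re]; exact Finset.sum_pos (fun i _ => Real.exp_pos _) Finset.univ_nonempty
  · simp

lemma trace_exp_ne_zero' [Nonempty n] {B : Matrix n n ℂ} (hB : B.IsHermitian) :
    (NormedSpace.exp B).trace ≠ 0 := by
  intro h0
  have := (trace_exp_pos' hB).1
  rw [h0] at this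
  simp at this

lemma expH_eq_exp_smul (M : Matrix n n ℂ) (β t : ℝ) :
    expH M β t = exp (t • ((-(β:ℂ)) • M)) := by
  unfold expH
  congr 1
  have : t • ((-(β:ℂ)) • M) = ((t:ℂ) * (-(β:ℂ))) • M := smul_smul (t:ℂ) _ M
  rw [this]
  congr 1
  ring


lemma isHermitian_real_smul' {M : Matrix n n ℂ} (h : M.IsHermitian) (r : ℝ) :
    ((r:ℂ) • M).IsHermitian := by
  rw [Matrix.IsHermitian, conjTranspose_smul, h.eq]
  congr 1
  simp [Complex.star_def, Complex.conj_ofReal]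

lemma stmt9_nonempty [Nonempty n] (H₀ H : Matrix n n ℂ) (hH₀ : H₀.IsHermitian)
    (hH : H.IsHermitian) (β : ℝ) (A : Matrix n n ℂ) :
    (A * gibbs H₀ β).trace - (A * gibbs H β).trace =
      (β : ℂ) * ∫ τ in (0:ℝ)..1, ∫ s in (0:ℝ)..1,
        gibbsCov (H₀ + (s : ℂ) • (H - H₀)) β τ (H - H₀) A := by
  set K : Matrix n n ℂ := H - H₀ with hK
  set B₀ : Matrix n n ℂ := (-(β:ℂ)) • H₀ with hB₀
  set B₁ : Matrix n n ℂ := (-(β:ℂ)) • K with hB₁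
  have hMs : ∀ s : ℝ, B₀ + s • B₁ = (-(β:ℂ)) • (H₀ + (s:ℂ) • K) := by
    intro s
    rw [smul_add]
    congr 1
    calc s • B₁ = (s:ℂ) • ((-(β:ℂ)) • K) := rfl
    _ = (-(β:ℂ)) • ((s:ℂ) • K) := smul_comm _ _ _
  have hKh : K.IsHermitian := hH.sub hH₀
  have hherm : ∀ s : ℝ, (B₀ + s • B₁).IsHermitian := by
    intro s
    rw [hMs]
    have h1 : (H₀ + (s:ℂ) • K).IsHermitian := hH₀.add (isHermitian_real_smul' hKh s)
    have := isHermitian_real_smul' h1 (-β)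
    simpa using this
  set E : ℝ → Matrix n n ℂ := fun s => exp (B₀ + s • B₁) with hE
  set Z : ℝ → ℂ := fun s => (E s).trace with hZdef
  have hZ : ∀ s, Z s ≠ 0 := fun s => trace_exp_ne_zero' (hherm s)
  set N : ℝ → ℂ := fun s => (A * E s).trace with hN
  have hexpH : ∀ (s t : ℝ), expH (H₀ + (s:ℂ) • K) β t = exp (t • (B₀ + s • B₁)) := by
    intro s t; rw [expH_eq_exp_smul, hMs]
  have hpartZ : ∀ s : ℝ, partZ (H₀ + (s:ℂ) • K) β = Z s := by
    intro s
    rw [partZ, hexpH s 1, one_smul]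
  -- endpoints
  have hg0 : (A * gibbs H₀ β).trace = N 0 / Z 0 := by
    have e0 : expH H₀ β 1 = E 0 := by
      rw [expH_eq_exp_smul, one_smul]
      show _ = exp (B₀ + (0:ℝ) • B₁)
      congr 1
      simp [hB₀]
    have p0 : partZ H₀ β = Z 0 := by rw [partZ, e0]
    rw [gibbs, p0, e0, mul_smul_comm, trace_smul, smul_eq_mul, div_eq_inv_mul]
  have hg1 : (A * gibbs H β).trace = N 1 / Z 1 := by
    have hH1 : H₀ + ((1:ℝ):ℂ) • K = H := by
      rw [Complex.ofReal_one, one_smul, hK]; abel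
    have e1 : expH H β 1 = E 1 := by
      show _ = exp (B₀ + (1:ℝ) • B₁)
      have h2 : B₀ + (1:ℝ) • B₁ = (-(β:ℂ)) • H := by
        rw [hMs 1, hH1]
      rw [h2, expH_eq_exp_smul, one_smul]
    have p1 : partZ H β = Z 1 := by rw [partZ, e1]
    rw [gibbs, p1, e1, mul_smul_comm, trace_smul, smul_eq_mul, div_eq_inv_mul]
  -- derivatives
  have hNder : ∀ s : ℝ, HasDerivAt N (∫ τ in (0:ℝ)..1, (A * exp (τ • (B₀ + s • B₁)) * B₁ *
      exp ((1 - τ:ℝ) • (B₀ + s • B₁))).trace) s := fun s => hasDerivAt_trace_exp' A B₀ B₁ s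
  have hZder : ∀ s : ℝ, HasDerivAt Z (-(β:ℂ) * (E s * K).trace) s := by
    intro s
    have h := hasDerivAt_trace_exp' 1 B₀ B₁ s
    simp only [one_mul] at h
    have hint : ∀ τ : ℝ, (exp (τ • (B₀ + s • B₁)) * B₁ *
        exp ((1 - τ:ℝ) • (B₀ + s • B₁))).trace = -(β:ℂ) * (E s * K).trace := by
      intro τ
      rw [trace_mul_cycle]
      have hprod : exp ((1 - τ:ℝ) • (B₀ + s • B₁)) * exp (τ • (B₀ + s • B₁)) = E s := by
        rw [hE, ← Matrix.exp_add_of_commute _ _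
          (((Commute.refl (B₀ + s • B₁)).smul_left _).smul_right _)]
        congr 1
        rw [← add_smul]
        norm_num
      rw [hprod, hB₁, mul_smul_comm, trace_smul]
      simp [smul_eq_mul]
    rw [show (-(β:ℂ) * (E s * K).trace) = ∫ τ in (0:ℝ)..1, (exp (τ • (B₀ + s • B₁)) * B₁ *
        exp ((1 - τ:ℝ) • (B₀ + s • B₁))).trace by
      simp only [hint]; rw [intervalIntegral.integral_const]; simp]
    exact h
  -- covariance rewriting
  have hgibbs : ∀ s : ℝ, gibbs (H₀ + (s:ℂ) • K) β = (Z s)⁻¹ • E s := by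
    intro s
    rw [gibbs, hpartZ, hexpH, one_smul]
  have hcov : ∀ s τ : ℝ, gibbsCov (H₀ + (s:ℂ) • K) β τ K A =
      (exp (τ • (B₀ + s • B₁)) * K * exp ((1 - τ:ℝ) • (B₀ + s • B₁)) * A).trace / Z s -
        (Z s)⁻¹ * (E s * K).trace * ((Z s)⁻¹ * (E s * A).trace) := by
    intro s τ
    rw [gibbsCov, hpartZ, hexpH, hexpH, hgibbs]
    congr 2
    · rw [smul_mul_assoc, trace_smul, smul_eq_mul]
    · rw [smul_mul_assoc, trace_smul, smul_eq_mul]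
  -- derivative of F equals -β ∫ cov
  set F : ℝ → ℂ := fun s => N s / Z s with hF
  have hFder : ∀ s : ℝ, HasDerivAt F
      (-(β:ℂ) * ∫ τ in (0:ℝ)..1, gibbsCov (H₀ + (s:ℂ) • K) β τ K A) s := by
    intro s
    have hder := (hNder s).div (hZder s) (hZ s)
    refine hder.congr_deriv ?_
    symm
    -- show -β ∫ cov = (N' Z - N Z')/Z²
    have hucont : Continuous fun τ : ℝ =>
        (exp (τ • (B₀ + s • B₁)) * K * exp ((1 - τ:ℝ) • (B₀ + s • B₁)) * A).trace := by
      apply Continuous.matrix_trace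
      exact (((continuous_exp_smul' _).mul continuous_const).mul
        (exp_continuous.comp ((continuous_const.sub continuous_id).smul continuous_const))).mul
        continuous_const
    have hIA : (∫ τ in (0:ℝ)..1, (A * exp (τ • (B₀ + s • B₁)) * B₁ *
        exp ((1 - τ:ℝ) • (B₀ + s • B₁))).trace) = -(β:ℂ) * ∫ τ in (0:ℝ)..1,
        (exp (τ • (B₀ + s • B₁)) * K * exp ((1 - τ:ℝ) • (B₀ + s • B₁)) * A).trace := by
      have hpt : ∀ τ : ℝ, (A * exp (τ • (B₀ + s • B₁)) * B₁ *
          exp ((1 - τ:ℝ) • (B₀ + s • B₁))).trace = -(β:ℂ) *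
          (exp (τ • (B₀ + s • B₁)) * K * exp ((1 - τ:ℝ) • (B₀ + s • B₁)) * A).trace := by
        intro τ
        rw [hB₁, mul_smul_comm, smul_mul_assoc, trace_smul, smul_eq_mul]
        congr 1
        rw [show A * exp (τ • (B₀ + s • B₁)) * K * exp ((1 - τ:ℝ) • (B₀ + s • B₁)) =
          A * (exp (τ • (B₀ + s • B₁)) * K * exp ((1 - τ:ℝ) • (B₀ + s • B₁))) by
            simp [mul_assoc]]
        rw [trace_mul_comm]
      simp only [hpt]
      rw [intervalIntegral.integral_const_mul]
    have hcovint : (∫ τ in (0:ℝ)..1, gibbsCov (H₀ + (s:ℂ) • K) β τ K A) =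
        (∫ τ in (0:ℝ)..1, (exp (τ • (B₀ + s • B₁)) * K *
          exp ((1 - τ:ℝ) • (B₀ + s • B₁)) * A).trace) / Z s -
        (Z s)⁻¹ * (E s * K).trace * ((Z s)⁻¹ * (E s * A).trace) := by
      simp only [hcov]
      rw [intervalIntegral.integral_sub ((hucont.div_const _).intervalIntegrable 0 1)
        (intervalIntegrable_const)]
      rw [intervalIntegral.integral_const, intervalIntegral.integral_div]
      simp
    rw [hcovint, hIA]
    have hNA : (E s * A).trace = N s := by rw [hN, trace_mul_comm]
    rw [hNA]
    field_simp [hZ s]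
    ring
  -- continuity of the covariance in (s, τ)
  have hcovcont : Continuous fun p : ℝ × ℝ =>
      gibbsCov (H₀ + ((p.1:ℝ):ℂ) • K) β p.2 K A := by
    have : (fun p : ℝ × ℝ => gibbsCov (H₀ + ((p.1:ℝ):ℂ) • K) β p.2 K A) = fun p : ℝ × ℝ =>
        (exp (p.2 • (B₀ + p.1 • B₁)) * K * exp ((1 - p.2:ℝ) • (B₀ + p.1 • B₁)) * A).trace
          / Z p.1 - (Z p.1)⁻¹ * (E p.1 * K).trace * ((Z p.1)⁻¹ * (E p.1 * A).trace) := by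
      funext p
      exact hcov p.1 p.2
    rw [this]
    have hA1 : Continuous fun u : ℝ => B₀ + u • B₁ :=
      continuous_const.add (continuous_id.smul continuous_const)
    have hEcont : Continuous E := exp_continuous.comp hA1
    have hZcont : Continuous Z := hEcont.matrix_trace
    have he1 : Continuous fun p : ℝ × ℝ => exp (p.2 • (B₀ + p.1 • B₁)) :=
      exp_continuous.comp (continuous_snd.smul (hA1.comp continuous_fst))
    have he2 : Continuous fun p : ℝ × ℝ => exp ((1 - p.2:ℝ) • (B₀ + p.1 • B₁)) :=
      exp_continuous.comp ((continuous_const.sub continuous_snd).smul (hA1.comp continuous_fst))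
    apply Continuous.sub
    · apply Continuous.div
      · exact Continuous.matrix_trace (((he1.mul continuous_const).mul he2).mul continuous_const)
      · exact hZcont.comp continuous_fst
      · exact fun p => hZ p.1
    · apply Continuous.mul
      · exact ((hZcont.comp continuous_fst).inv₀ (fun p => hZ p.1)).mul
          ((hEcont.comp continuous_fst).mul continuous_const).matrix_trace
      · exact ((hZcont.comp continuous_fst).inv₀ (fun p => hZ p.1)).mul
          ((hEcont.comp continuous_fst).mul continuous_const).matrix_trace
  -- FTC
  have hCovCont : Continuous fun s : ℝ => ∫ τ in (0:ℝ)..1,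
      gibbsCov (H₀ + (s:ℂ) • K) β τ K A := by
    apply intervalIntegral.continuous_parametric_intervalIntegral_of_continuous'
      (f := fun (s : ℝ) (τ : ℝ) => gibbsCov (H₀ + ((s:ℝ):ℂ) • K) β τ K A)
    exact hcovcont
  have hftc : (∫ s in (0:ℝ)..1, -(β:ℂ) * ∫ τ in (0:ℝ)..1,
      gibbsCov (H₀ + (s:ℂ) • K) β τ K A) = F 1 - F 0 :=
    intervalIntegral.integral_eq_sub_of_hasDerivAt (fun s _ => hFder s)
      ((continuous_const.mul hCovCont).intervalIntegrable 0 1)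
  rw [hg0, hg1]
  have hkey : F 0 - F 1 = (β:ℂ) * ∫ s in (0:ℝ)..1, ∫ τ in (0:ℝ)..1,
      gibbsCov (H₀ + (s:ℂ) • K) β τ K A := by
    rw [← neg_sub (F 1) (F 0), ← hftc]
    rw [intervalIntegral.integral_const_mul]
    ring
  rw [show N 0 / Z 0 - N 1 / Z 1 = F 0 - F 1 from rfl, hkey]
  congr 1
  exact swapIntegral hcovcont

end Aux

theorem stmt9 (H₀ H : Matrix n n ℂ) (hH₀ : H₀.IsHermitian) (hH : H.IsHermitian)
    (β : ℝ) (A : Matrix n n ℂ) :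
    (A * gibbs H₀ β).trace - (A * gibbs H β).trace =
      (β : ℂ) * ∫ τ in (0:ℝ)..1, ∫ s in (0:ℝ)..1,
        gibbsCov (H₀ + (s : ℂ) • (H - H₀)) β τ (H - H₀) A := by
  rcases isEmpty_or_nonempty n with hn | hn
  · simp [gibbsCov, partZ, gibbs, Matrix.trace, Finset.univ_eq_empty]
  · exact stmt9_nonempty H₀ H hH₀ hH β A
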